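/- Let $\Omega(p) = 1 - \frac{1}{2}\mathrm{erfc}\left(\frac{p - \epsilon + \beta(Q - B - \mu)}{\sqrt{2}\sigma\beta}\right)$ and $\widetilde{EC}(p) = C_0 + (p - C_0)(1 - e^{-\nu \Omega(p)})$ with $\nu > 0$, $\sigma, \beta > 0$, $C_0 > \epsilon \ge 0$. If $B + \mu \le Q$, then $\widetilde{EC}$ is convex on the interval $[\epsilon, C_0]$. -/

import Mathlib

open MeasureTheory

noncomputable def psi (x : ℝ) : ℝ := ∫ s in (0:ℝ)..x, Real.exp (-s ^ 2)

lemma cont_gauss : Continuous fun s : ℝ => Real.exp (-s ^ 2) := by continuity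

lemma psi_hasDeriv (x : ℝ) : HasDerivAt psi (Real.exp (-x ^ 2)) x :=
  intervalIntegral.integral_hasDerivAt_right
    (cont_gauss.intervalIntegrable _ _)
    (cont_gauss.stronglyMeasurableAtFilter _ _)
    cont_gauss.continuousAt

section

variable (c d ν C₀ ε a₀ r : ℝ)

noncomputable def gf (p : ℝ) : ℝ := (p - ε + c) / d
noncomputable def wf (p : ℝ) : ℝ := ν * (a₀ + psi (gf c d ε p) * r)
noncomputable def Ef (p : ℝ) : ℝ := Real.exp (-(gf c d ε p) ^ 2)
noncomputable def Xf (p : ℝ) : ℝ := Real.exp (-wf c d ν ε a₀ r p)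
noncomputable def kk : ℝ := ν * r / d
noncomputable def Gf (p : ℝ) : ℝ := C₀ + (p - C₀) * (1 - Xf c d ν ε a₀ r p)
noncomputable def G1 (p : ℝ) : ℝ :=
  (1 - Xf c d ν ε a₀ r p) + (p - C₀) * (kk d ν r * Ef c d ε p * Xf c d ν ε a₀ r p)
noncomputable def G2 (p : ℝ) : ℝ :=
  2 * (kk d ν r * Ef c d ε p * Xf c d ν ε a₀ r p)
    + (p - C₀) * (kk d ν r * Ef c d ε p * Xf c d ν ε a₀ r p
        * (-2 * gf c d ε p / d - kk d ν r * Ef c d ε p))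

lemma gf_deriv (p : ℝ) : HasDerivAt (gf c d ε) (1 / d) p := by
  unfold gf
  simpa using (((hasDerivAt_id p).sub_const ε).add_const c).div_const d

lemma wf_deriv (p : ℝ) :
    HasDerivAt (wf c d ν ε a₀ r) (kk d ν r * Ef c d ε p) p := by
  have h := HasDerivAt.const_mul ν
    ((((psi_hasDeriv (gf c d ε p)).comp p (gf_deriv c d ε p)).mul_const r).const_add a₀)
  refine h.congr_deriv ?_
  unfold kk Ef
  ring

lemma Ef_deriv (p : ℝ) :
    HasDerivAt (Ef c d ε) (Ef c d ε p * (-2 * gf c d ε p / d)) p := by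
  have h := (((gf_deriv c d ε p).pow 2).neg).exp
  refine h.congr_deriv ?_
  unfold Ef
  simp only [Pi.neg_apply, Pi.pow_apply]
  push_cast
  ring

lemma Xf_deriv (p : ℝ) :
    HasDerivAt (Xf c d ν ε a₀ r) (-(kk d ν r * Ef c d ε p) * Xf c d ν ε a₀ r p) p := by
  have h := ((wf_deriv c d ν ε a₀ r p).neg).exp
  refine h.congr_deriv ?_
  unfold Xf
  simp only [Pi.neg_apply]
  ring

lemma Gf_deriv (p : ℝ) :
    HasDerivAt (Gf c d ν C₀ ε a₀ r) (G1 c d ν C₀ ε a₀ r p) p := by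
  have h := HasDerivAt.const_add C₀
    (((hasDerivAt_id p).sub_const C₀).mul ((Xf_deriv c d ν ε a₀ r p).const_sub 1))
  refine h.congr_deriv ?_
  unfold G1
  simp only [id_eq]
  ring

lemma G1_deriv (p : ℝ) :
    HasDerivAt (G1 c d ν C₀ ε a₀ r) (G2 c d ν C₀ ε a₀ r p) p := by
  have h1 := (Xf_deriv c d ν ε a₀ r p).const_sub 1
  have h2 := ((hasDerivAt_id p).sub_const C₀).mul
    ((HasDerivAt.const_mul (kk d ν r) (Ef_deriv c d ε p)).mul (Xf_deriv c d ν ε a₀ r p))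
  have h := h1.add h2
  refine h.congr_deriv ?_
  unfold G2
  simp only [id_eq, Pi.mul_apply]
  ring

lemma Gf_convex (hd : 0 < d) (hν : 0 < ν) (hr : 0 ≤ r) (hc : 0 ≤ c) (hεC : ε < C₀) :
    ConvexOn ℝ (Set.Icc ε C₀) (Gf c d ν C₀ ε a₀ r) := by
  have hderiv : deriv (Gf c d ν C₀ ε a₀ r) = G1 c d ν C₀ ε a₀ r :=
    funext fun y => (Gf_deriv c d ν C₀ ε a₀ r y).deriv
  refine convexOn_of_deriv2_nonneg (convex_Icc ε C₀)
    (fun x _ => (Gf_deriv c d ν C₀ ε a₀ r x).continuousAt.continuousWithinAt)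
    (fun x _ => (Gf_deriv c d ν C₀ ε a₀ r x).differentiableAt.differentiableWithinAt)
    ?_ ?_
  · rw [hderiv]
    exact fun x _ => (G1_deriv c d ν C₀ ε a₀ r x).differentiableAt.differentiableWithinAt
  · intro x hx
    rw [interior_Icc] at hx
    have h2 : deriv^[2] (Gf c d ν C₀ ε a₀ r) x = G2 c d ν C₀ ε a₀ r x := by
      show deriv (deriv (Gf c d ν C₀ ε a₀ r)) x = _
      rw [hderiv]
      exact (G1_deriv c d ν C₀ ε a₀ r x).deriv
    rw [h2]
    have hk : 0 ≤ kk d ν r := div_nonneg (mul_nonneg hν.le hr) hd.le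
    have hE : 0 < Ef c d ε x := Real.exp_pos _
    have hX : 0 < Xf c d ν ε a₀ r x := Real.exp_pos _
    have hgf : 0 ≤ gf c d ε x := by
      unfold gf
      apply div_nonneg _ hd.le
      linarith [hx.1]
    have hA : 0 ≤ kk d ν r * Ef c d ε x * Xf c d ν ε a₀ r x :=
      mul_nonneg (mul_nonneg hk hE.le) hX.le
    have hm : -2 * gf c d ε x / d - kk d ν r * Ef c d ε x ≤ 0 := by
      have h1 : -2 * gf c d ε x / d ≤ 0 := by
        apply div_nonpos_of_nonpos_of_nonneg _ hd.le
        linarith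
      nlinarith
    have hterm : 0 ≤ (x - C₀) * (kk d ν r * Ef c d ε x * Xf c d ν ε a₀ r x
        * (-2 * gf c d ε x / d - kk d ν r * Ef c d ε x)) := by
      have := mul_nonneg (by linarith [hx.2] : (0:ℝ) ≤ C₀ - x)
        (mul_nonneg hA (by linarith : (0:ℝ) ≤ -(-2 * gf c d ε x / d - kk d ν r * Ef c d ε x)))
      nlinarith [this]
    unfold G2
    nlinarith [hterm, hA]

end

/-- with `Ω(p) = 1 - ½ erfc((p-ε+β(Q-B-μ))/(√2 σ β))` and
`EC(p) = C₀ + (p-C₀)(1 - e^{-ν Ω(p)})`, if `B + μ ≤ Q` then `EC` is convex on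
`[ε, C₀]`. -/
theorem stmt_11 (Q B β μ σ ε C₀ ν : ℝ)
    (hν : 0 < ν) (hσ : 0 < σ) (hβ : 0 < β) (hε : 0 ≤ ε) (hC₀ : ε < C₀)
    (hBμ : B + μ ≤ Q)
    (erfc : ℝ → ℝ)
    (herfc : ∀ t, erfc t = (2 / Real.sqrt π) * ∫ s in Set.Ioi t, Real.exp (-s ^ 2))
    (Ω EC : ℝ → ℝ)
    (hΩ : ∀ p, Ω p = 1 - (1 / 2) * erfc ((p - ε + β * (Q - B - μ)) / (Real.sqrt 2 * σ * β)))
    (hEC : ∀ p, EC p = C₀ + (p - C₀) * (1 - Real.exp (-(ν * Ω p)))) :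
    ConvexOn ℝ (Set.Icc ε C₀) EC := by
  set c := β * (Q - B - μ) with hc_def
  set d := Real.sqrt 2 * σ * β with hd_def
  set r := (Real.sqrt π)⁻¹ with hr_def
  set a₀ := 1 - Real.sqrt Real.pi * r / 2 with ha_def
  have hd : 0 < d := by positivity
  have hc : 0 ≤ c := by
    apply mul_nonneg hβ.le
    linarith
  have hr : 0 ≤ r := inv_nonneg.2 (Real.sqrt_nonneg _)
  -- integral facts
  have hf_int : Integrable (fun s : ℝ => Real.exp (-s ^ 2)) := by
    simpa using integrable_exp_neg_mul_sq (one_pos)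
  have htot : ∫ s : ℝ, Real.exp (-s ^ 2) = Real.sqrt Real.pi := by
    simpa using integral_gaussian 1
  have hIoi0 : ∫ s in Set.Ioi (0:ℝ), Real.exp (-s ^ 2) = Real.sqrt Real.pi / 2 := by
    simpa using integral_gaussian_Ioi 1
  have hIic0 : ∫ s in Set.Iic (0:ℝ), Real.exp (-s ^ 2) = Real.sqrt Real.pi / 2 := by
    have h := intervalIntegral.integral_Iic_add_Ioi (b := (0:ℝ))
      hf_int.integrableOn hf_int.integrableOn
    rw [htot, hIoi0] at h
    linarith
  have hIoi : ∀ t : ℝ, ∫ s in Set.Ioi t, Real.exp (-s ^ 2)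
      = Real.sqrt Real.pi / 2 - psi t := by
    intro t
    have h1 := intervalIntegral.integral_Iic_sub_Iic (a := (0:ℝ)) (b := t)
      hf_int.integrableOn hf_int.integrableOn
    have h2 := intervalIntegral.integral_Iic_add_Ioi (b := t)
      hf_int.integrableOn hf_int.integrableOn
    rw [htot] at h2
    rw [hIic0] at h1
    unfold psi
    linarith
  have hΩeq : ∀ p, ν * Ω p = wf c d ν ε a₀ r p := by
    intro p
    rw [hΩ, herfc, hIoi]
    unfold wf gf
    rw [ha_def, hr_def]
    ring
  have hECeq : EC = Gf c d ν C₀ ε a₀ r := by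
    funext p
    rw [hEC, hΩeq]
    rfl
  rw [hECeq]
  exact Gf_convex c d ν C₀ ε a₀ r hd hν hr hc hC₀
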